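/- Non-negativity of the explicit system scheme: let ψ be a saturation with saturation level α. If ρ_i ≥ 0 entrywise and σ_i ≤ α for all i ∈ ℤ, and Δt ≤ Δx/(2·ψ(0)·‖u‖), then the updated values satisfy ρ_i' ≥ 0 entrywise for all i ∈ ℤ. -/
import Mathlib


/-- A *saturation* with saturation level `α > 0`: a continuous non-increasing function
`ψ : [0,∞) → ℝ` with `ψ α = 0` and `(α − s)·ψ s > 0` for every `s ≥ 0`, `s ≠ α`. -/
def IsSaturation (ψ : ℝ → ℝ) (α : ℝ) : Prop :=
  0 < α ∧ ContinuousOn ψ (Set.Ici 0) ∧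
    (∀ s₁ s₂, 0 ≤ s₁ → s₁ ≤ s₂ → ψ s₂ ≤ ψ s₁) ∧
    ψ α = 0 ∧ ∀ s, 0 ≤ s → s ≠ α → 0 < (α - s) * ψ s

/-- The minmod limiter. -/
noncomputable def minmod (a b c : ℝ) : ℝ :=
  if 0 < a ∧ 0 < b ∧ 0 < c then min a (min b c)
  else if a < 0 ∧ b < 0 ∧ c < 0 then max a (max b c)
  else 0

/-- Minmod mmSlope `(ρ_x)_i`. -/
noncomputable def mmSlope (θ Δx : ℝ) (ρ : ℤ → ℝ) (i : ℤ) : ℝ :=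
  minmod (θ * (ρ (i + 1) - ρ i) / Δx) ((ρ (i + 1) - ρ (i - 1)) / (2 * Δx))
    (θ * (ρ i - ρ (i - 1)) / Δx)

/-- East reconstruction `ρ_i^E`. -/
noncomputable def recE (θ Δx : ℝ) (ρ : ℤ → ℝ) (i : ℤ) : ℝ :=
  ρ i + Δx / 2 * mmSlope θ Δx ρ i

/-- West reconstruction `ρ_i^W`. -/
noncomputable def recW (θ Δx : ℝ) (ρ : ℤ → ℝ) (i : ℤ) : ℝ :=
  ρ i - Δx / 2 * mmSlope θ Δx ρ i


/-- Total density `σ_i = Σ_p (ρ_i)_p`. -/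
noncomputable def totalDensity {P : ℕ} (ρ : ℤ → Fin P → ℝ) (i : ℤ) : ℝ :=
  ∑ p, ρ i p

/-- Entrywise east reconstruction `(ρ_i^E)_p`. -/
noncomputable def recEV (θ Δx : ℝ) {P : ℕ} (ρ : ℤ → Fin P → ℝ) (i : ℤ) (p : Fin P) : ℝ :=
  recE θ Δx (fun j => ρ j p) i

/-- Entrywise west reconstruction `(ρ_i^W)_p`. -/
noncomputable def recWV (θ Δx : ℝ) {P : ℕ} (ρ : ℤ → Fin P → ℝ) (i : ℤ) (p : Fin P) : ℝ :=
  recW θ Δx (fun j => ρ j p) i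

/-- Numerical flux `(F_{i+1/2})_p` of the explicit system scheme (with `θ = 2`);
`u i p` denotes `(u_{i+1/2})_p` and the saturation is evaluated on the reconstructions
of the total density `σ`. -/
noncomputable def numFluxV (ψ : ℝ → ℝ) (Δx : ℝ) {P : ℕ} (ρ u : ℤ → Fin P → ℝ)
    (i : ℤ) (p : Fin P) : ℝ :=
  recEV 2 Δx ρ i p * ψ (recW 2 Δx (totalDensity ρ) (i + 1)) * max (u i p) 0 +
    recWV 2 Δx ρ (i + 1) p * ψ (recE 2 Δx (totalDensity ρ) i) * min (u i p) 0

/-- Updated cell values `(ρ_i')_p` of the explicit system scheme. -/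
noncomputable def updateExplicitV (ψ : ℝ → ℝ) (Δx Δt : ℝ) {P : ℕ} (ρ u : ℤ → Fin P → ℝ)
    (i : ℤ) (p : Fin P) : ℝ :=
  ρ i p - Δt / Δx * (numFluxV ψ Δx ρ u i p - numFluxV ψ Δx ρ u (i - 1) p)

/-- The CFL constant `γ = inf_{s ∈ [0,α)} (α − s)/(α·ψ s)`. -/
noncomputable def gammaCFL (ψ : ℝ → ℝ) (α : ℝ) : ℝ :=
  sInf ((fun s => (α - s) / (α * ψ s)) '' Set.Ico 0 α)

/-- Non-negativity of the explicit system scheme under the CFL condition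
`Δt ≤ Δx/(2·ψ(0)·‖u‖)`; `U` is an upper bound for `‖u‖`. -/
lemma minmod_trichotomy (a b c : ℝ) :
    minmod a b c = 0 ∨
      (0 < minmod a b c ∧ minmod a b c ≤ a ∧ minmod a b c ≤ c) ∨
      (minmod a b c < 0 ∧ a ≤ minmod a b c ∧ c ≤ minmod a b c) := by
  unfold minmod
  split_ifs with h1 h2
  · exact Or.inr (Or.inl ⟨lt_min h1.1 (lt_min h1.2.1 h1.2.2), min_le_left _ _,
      (min_le_right _ _).trans (min_le_right _ _)⟩)
  · exact Or.inr (Or.inr ⟨max_lt h2.1 (max_lt h2.2.1 h2.2.2), le_max_left _ _,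
      (le_max_right _ _).trans (le_max_right _ _)⟩)
  · exact Or.inl rfl

lemma rec_bounds (Δx : ℝ) (hΔx : 0 < Δx) (f : ℤ → ℝ) (i : ℤ) :
    min (f (i-1)) (min (f i) (f (i+1))) ≤ recE 2 Δx f i ∧
    recE 2 Δx f i ≤ max (f (i-1)) (max (f i) (f (i+1))) ∧
    min (f (i-1)) (min (f i) (f (i+1))) ≤ recW 2 Δx f i ∧
    recW 2 Δx f i ≤ max (f (i-1)) (max (f i) (f (i+1))) := by
  have hmin : min (f (i-1)) (min (f i) (f (i+1))) ≤ f i :=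
    (min_le_right _ _).trans (min_le_left _ _)
  have hmax : f i ≤ max (f (i-1)) (max (f i) (f (i+1))) :=
    (le_max_left _ _).trans (le_max_right _ _)
  have hminl : min (f (i-1)) (min (f i) (f (i+1))) ≤ f (i-1) := min_le_left _ _
  have hminr : min (f (i-1)) (min (f i) (f (i+1))) ≤ f (i+1) :=
    (min_le_right _ _).trans (min_le_right _ _)
  have hmaxl : f (i-1) ≤ max (f (i-1)) (max (f i) (f (i+1))) := le_max_left _ _
  have hmaxr : f (i+1) ≤ max (f (i-1)) (max (f i) (f (i+1))) :=
    (le_max_right _ _).trans (le_max_right _ _)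
  have hs : mmSlope 2 Δx f i = minmod (2 * (f (i + 1) - f i) / Δx)
      ((f (i + 1) - f (i - 1)) / (2 * Δx)) (2 * (f i - f (i - 1)) / Δx) := rfl
  have hE : recE 2 Δx f i = f i + Δx / 2 * mmSlope 2 Δx f i := rfl
  have hW : recW 2 Δx f i = f i - Δx / 2 * mmSlope 2 Δx f i := rfl
  rcases minmod_trichotomy (2 * (f (i + 1) - f i) / Δx) ((f (i + 1) - f (i - 1)) / (2 * Δx))
      (2 * (f i - f (i - 1)) / Δx) with h | h | h
  · rw [← hs] at h
    rw [hE, hW, h]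
    constructor; · linarith
    constructor; · linarith
    constructor; · linarith
    linarith
  · rw [← hs] at h
    obtain ⟨h0, ha, hc⟩ := h
    rw [le_div_iff₀ hΔx] at ha hc
    rw [hE, hW]
    constructor; · nlinarith
    constructor; · nlinarith
    constructor; · nlinarith
    nlinarith
  · rw [← hs] at h
    obtain ⟨h0, ha, hc⟩ := h
    rw [div_le_iff₀ hΔx] at ha hc
    rw [hE, hW]
    constructor; · nlinarith
    constructor; · nlinarith
    constructor; · nlinarith
    nlinarith

theorem explicit_system_nonnegativity
    (ψ : ℝ → ℝ) (α : ℝ) (hψ : IsSaturation ψ α)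
    (Δx Δt : ℝ) (hΔx : 0 < Δx) (hΔt : 0 < Δt)
    (P : ℕ) (ρ u : ℤ → Fin P → ℝ) (U : ℝ) (hU : 0 < U)
    (hu : ∀ i p, |u i p| ≤ U)
    (hρ : ∀ i p, 0 ≤ ρ i p) (hσ : ∀ i, totalDensity ρ i ≤ α)
    (hCFL : Δt ≤ Δx / (2 * ψ 0 * U)) :
    ∀ i p, 0 ≤ updateExplicitV ψ Δx Δt ρ u i p := by
  obtain ⟨hα, hcont, hmono, hψα, hsign⟩ := hψ
  have hψ0 : 0 < ψ 0 := by
    have h := hsign 0 le_rfl (by linarith)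
    nlinarith
  have hσ0 : ∀ j, 0 ≤ totalDensity ρ j := fun j =>
    Finset.sum_nonneg fun p _ => hρ j p
  have hψmem : ∀ t, 0 ≤ t → t ≤ α → 0 ≤ ψ t ∧ ψ t ≤ ψ 0 := fun t h0 h1 =>
    ⟨hψα ▸ hmono t α h0 h1, hmono 0 t le_rfl h0⟩
  have hσrec : ∀ j, (0 ≤ recE 2 Δx (totalDensity ρ) j ∧ recE 2 Δx (totalDensity ρ) j ≤ α)
      ∧ (0 ≤ recW 2 Δx (totalDensity ρ) j ∧ recW 2 Δx (totalDensity ρ) j ≤ α) := by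
    intro j
    obtain ⟨h1, h2, h3, h4⟩ := rec_bounds Δx hΔx (totalDensity ρ) j
    have hmn : 0 ≤ min (totalDensity ρ (j-1)) (min (totalDensity ρ j) (totalDensity ρ (j+1))) :=
      le_min (hσ0 _) (le_min (hσ0 _) (hσ0 _))
    have hmx : max (totalDensity ρ (j-1)) (max (totalDensity ρ j) (totalDensity ρ (j+1))) ≤ α :=
      max_le (hσ _) (max_le (hσ _) (hσ _))
    exact ⟨⟨hmn.trans h1, h2.trans hmx⟩, ⟨hmn.trans h3, h4.trans hmx⟩⟩
  have hψrec : ∀ j, (0 ≤ ψ (recE 2 Δx (totalDensity ρ) j) ∧ ψ (recE 2 Δx (totalDensity ρ) j) ≤ ψ 0)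
      ∧ (0 ≤ ψ (recW 2 Δx (totalDensity ρ) j) ∧ ψ (recW 2 Δx (totalDensity ρ) j) ≤ ψ 0) := by
    intro j
    obtain ⟨⟨hE0, hEα⟩, ⟨hW0, hWα⟩⟩ := hσrec j
    exact ⟨hψmem _ hE0 hEα, hψmem _ hW0 hWα⟩
  have hρrec : ∀ j p, 0 ≤ recEV 2 Δx ρ j p ∧ 0 ≤ recWV 2 Δx ρ j p := by
    intro j p
    obtain ⟨h1, _, h3, _⟩ := rec_bounds Δx hΔx (fun k => ρ k p) j
    have hmn : (0:ℝ) ≤ min (ρ (j-1) p) (min (ρ j p) (ρ (j+1) p)) :=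
      le_min (hρ _ _) (le_min (hρ _ _) (hρ _ _))
    exact ⟨hmn.trans h1, hmn.trans h3⟩
  have hCFL' : Δt * (2 * ψ 0 * U) ≤ Δx := by
    rw [le_div_iff₀ (by positivity)] at hCFL; exact hCFL
  intro i p
  have hEW : recEV 2 Δx ρ i p + recWV 2 Δx ρ i p = 2 * ρ i p := by
    unfold recEV recWV recE recW; ring
  have hii : i - 1 + 1 = i := by ring
  unfold updateExplicitV numFluxV
  rw [hii]
  set E := recEV 2 Δx ρ i p with hEdef
  set W := recWV 2 Δx ρ i p with hWdef
  set W1 := recWV 2 Δx ρ (i+1) p with hW1def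
  set E0 := recEV 2 Δx ρ (i-1) p with hE0def
  set pW1 := ψ (recW 2 Δx (totalDensity ρ) (i+1)) with hpW1
  set pEi := ψ (recE 2 Δx (totalDensity ρ) i) with hpEi
  set pWi := ψ (recW 2 Δx (totalDensity ρ) i) with hpWi
  set pE0 := ψ (recE 2 Δx (totalDensity ρ) (i-1)) with hpE0
  obtain ⟨hE, hW⟩ := hρrec i p
  obtain ⟨_, hW1⟩ := hρrec (i+1) p
  obtain ⟨hE0, _⟩ := hρrec (i-1) p
  obtain ⟨⟨hpEi0, hpEiψ⟩, ⟨hpWi0, hpWiψ⟩⟩ := hψrec i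
  obtain ⟨_, ⟨hpW10, hpW1ψ⟩⟩ := hψrec (i+1)
  obtain ⟨⟨hpE00, hpE0ψ⟩, _⟩ := hψrec (i-1)
  have hup1 : 0 ≤ max (u i p) 0 := le_max_right _ _
  have hup1U : max (u i p) 0 ≤ U := max_le ((le_abs_self _).trans (hu i p)) hU.le
  have hum1 : min (u i p) 0 ≤ 0 := min_le_right _ _
  have hup0 : 0 ≤ max (u (i-1) p) 0 := le_max_right _ _
  have hum0 : min (u (i-1) p) 0 ≤ 0 := min_le_right _ _
  have hum0U : -U ≤ min (u (i-1) p) 0 := by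
    have := neg_abs_le (u (i-1) p)
    have := hu (i-1) p
    exact le_min (by linarith) (by linarith)
  -- term bounds
  have t1 : E * pW1 * max (u i p) 0 ≤ E * (ψ 0 * U) := by
    have hA := mul_nonneg (mul_nonneg hE (sub_nonneg.2 hpW1ψ)) hU.le
    have hB := mul_nonneg (mul_nonneg hE hpW10) (sub_nonneg.2 hup1U)
    linarith only [hA, hB]
  have t2 : W1 * pEi * min (u i p) 0 ≤ 0 :=
    mul_nonpos_of_nonneg_of_nonpos (mul_nonneg hW1 hpEi0) hum1
  have t3 : 0 ≤ E0 * pWi * max (u (i-1) p) 0 :=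
    mul_nonneg (mul_nonneg hE0 hpWi0) hup0
  have t4 : -(W * (ψ 0 * U)) ≤ W * pE0 * min (u (i-1) p) 0 := by
    have hA := mul_nonneg (mul_nonneg hW (sub_nonneg.2 hpE0ψ)) hU.le
    have hB := mul_nonneg (mul_nonneg hW hpE00)
      (by linarith only [hum0U] : 0 ≤ min (u (i-1) p) 0 + U)
    linarith only [hA, hB]
  have hD : E * pW1 * max (u i p) 0 + W1 * pEi * min (u i p) 0
      - (E0 * pWi * max (u (i-1) p) 0 + W * pE0 * min (u (i-1) p) 0)
      ≤ (E + W) * (ψ 0 * U) := by linarith only [t1, t2, t3, t4]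
  rw [hEW] at hD
  have hlam : 0 ≤ Δt / Δx := div_nonneg hΔt.le hΔx.le
  have h5 := mul_le_mul_of_nonneg_left hD hlam
  have h6 : Δt / Δx * (2 * ψ 0 * U) ≤ 1 := by
    rw [div_mul_eq_mul_div, div_le_one hΔx]; linarith
  have h7 : ρ i p * (Δt / Δx * (2 * ψ 0 * U)) ≤ ρ i p * 1 :=
    mul_le_mul_of_nonneg_left h6 (hρ i p)
  linarith only [h5, h7]
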